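/- Let σ_B be a positive definite m×m matrix, Δ ∈ H^{mn}_+, Λ_R ∈ H^n, and β ∈ ℝ. Define ρ_{RB} = exp(I_n ⊗ log σ_B − βΔ + Λ_R ⊗ I_m − I_{mn}). Then ρ_{RB} is positive definite Hermitian, and it is the unique minimizer over H^{mn}_+ of the partial Lagrangian ρ ↦ Tr(ρ log ρ) − Tr(ρ (I_n ⊗ log σ_B − βΔ + Λ_R ⊗ I_m)). -/

import Mathlib

open Matrix Kronecker
open scoped ComplexOrder

/-- Matrix logarithm of a Hermitian matrix via its spectral decomposition,
with the convention `Real.log 0 = 0` off the support. -/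
noncomputable def matLog {n : Type*} [Fintype n] [DecidableEq n] {A : Matrix n n ℂ}
    (hA : A.IsHermitian) : Matrix n n ℂ :=
  (hA.eigenvectorUnitary : Matrix n n ℂ) *
    Matrix.diagonal (fun i => (Real.log (hA.eigenvalues i) : ℂ)) *
    star (hA.eigenvectorUnitary : Matrix n n ℂ)

/-- `Tr(A log A)` for a Hermitian matrix `A`, i.e. `∑ λᵢ log λᵢ` with `0 log 0 = 0`. -/
noncomputable def entSum {n : Type*} [Fintype n] [DecidableEq n] {A : Matrix n n ℂ}
    (hA : A.IsHermitian) : ℝ :=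
  ∑ i, hA.eigenvalues i * Real.log (hA.eigenvalues i)

/-- Quantum relative entropy `S(ρ‖σ) = Tr(ρ log ρ) − Tr(ρ log σ)`. -/
noncomputable def qRelEnt {n : Type*} [Fintype n] [DecidableEq n] {ρ σ : Matrix n n ℂ}
    (hρ : ρ.IsHermitian) (hσ : σ.IsHermitian) : ℝ :=
  entSum hρ - (Matrix.trace (ρ * matLog hσ)).re

/-- The objective `ρ ↦ Tr(ρ log ρ) − Tr(ρ Δ̃)`. -/
noncomputable def obj {n : Type*} [Fintype n] [DecidableEq n] (Δ : Matrix n n ℂ)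
    {ρ : Matrix n n ℂ} (hρ : ρ.IsHermitian) : ℝ :=
  entSum hρ - (Matrix.trace (ρ * Δ)).re

/-- Partial trace over the first tensor factor. -/
noncomputable def ptrace1 {n m : Type*} [Fintype n] (C : Matrix (n × m) (n × m) ℂ) :
    Matrix m m ℂ :=
  Matrix.of fun k l => ∑ i, C (i, k) (i, l)

/-- Partial trace over the second tensor factor. -/
noncomputable def ptrace2 {n m : Type*} [Fintype m] (C : Matrix (n × m) (n × m) ℂ) :
    Matrix n n ℂ :=
  Matrix.of fun i j => ∑ k, C (i, k) (j, k)

set_option linter.unusedSectionVars false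
set_option linter.unusedTactic false

section Helpers
variable {k : Type*} [Fintype k] [DecidableEq k]

lemma key_nonneg {x l : ℝ} (hx : 0 ≤ x) :
    0 ≤ x * Real.log x - x * l + Real.exp (l - 1) := by
  rcases hx.eq_or_lt with h | h
  · rw [← h]; simpa using (Real.exp_pos (l - 1)).le
  · set t : ℝ := Real.log x - (l - 1) with ht
    have hx' : x = Real.exp (l - 1) * Real.exp t := by
      rw [← Real.exp_add,
        show l - 1 + t = Real.log x by rw [ht]; ring, Real.exp_log h]
    have hlog : Real.log x = t + (l - 1) := by rw [ht]; ring
    have h1 : Real.exp t * (1 - t) ≤ 1 := by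
      have := Real.add_one_le_exp (-t)
      have h2 : Real.exp t * Real.exp (-t) = 1 := by rw [← Real.exp_add]; simp
      nlinarith [Real.exp_pos t]
    have ha := Real.exp_pos (l - 1)
    rw [hlog, hx']
    nlinarith [Real.exp_pos t, mul_nonneg ha.le (sub_nonneg.mpr h1)]

lemma key_eq {x l : ℝ} (hx : 0 ≤ x)
    (h : x * Real.log x - x * l + Real.exp (l - 1) = 0) : x = Real.exp (l - 1) := by
  rcases hx.eq_or_lt with h0 | h0
  · exfalso; rw [← h0] at h; nlinarith [Real.exp_pos (l - 1)]
  · by_contra hne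
    set t : ℝ := Real.log x - (l - 1) with ht
    have hx' : x = Real.exp (l - 1) * Real.exp t := by
      rw [← Real.exp_add,
        show l - 1 + t = Real.log x by rw [ht]; ring, Real.exp_log h0]
    have hlog : Real.log x = t + (l - 1) := by rw [ht]; ring
    have htne : t ≠ 0 := by
      intro h0t
      exact hne (by rw [hx', h0t, Real.exp_zero, mul_one])
    have h1 : Real.exp t * (1 - t) < 1 := by
      have := Real.add_one_lt_exp (neg_ne_zero.mpr htne)
      have h2 : Real.exp t * Real.exp (-t) = 1 := by rw [← Real.exp_add]; simp
      nlinarith [Real.exp_pos t]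
    have ha := Real.exp_pos (l - 1)
    rw [hlog, hx'] at h
    nlinarith [Real.exp_pos t, mul_pos ha (sub_pos.mpr h1)]

/-- well-definedness of functional calculus -/
lemma conj_diag_eq_of_eq {U V : Matrix k k ℂ} (hU1 : U * star U = 1) (hU2 : star U * U = 1)
    (hV1 : V * star V = 1) (hV2 : star V * V = 1) {d e : k → ℝ} (f : ℝ → ℝ)
    (h : U * diagonal (fun i => (d i : ℂ)) * star U
        = V * diagonal (fun i => (e i : ℂ)) * star V) :
    U * diagonal (fun i => (f (d i) : ℂ)) * star U
      = V * diagonal (fun i => (f (e i) : ℂ)) * star V := by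
  set S : Matrix k k ℂ := star V * U with hS
  have hstarS : star S = star U * V := by rw [hS, Matrix.star_mul, star_star]
  have hSS' : S * star S = 1 := by
    rw [hS, hstarS, mul_assoc, ← mul_assoc U, hU1, one_mul, hV2]
  have hS'S : star S * S = 1 := by
    rw [hS, hstarS, mul_assoc, ← mul_assoc V, hV1, one_mul, hU2]
  have hUS : V * S = U := by rw [hS, ← mul_assoc, hV1, one_mul]
  have hcomm : S * diagonal (fun i => (d i : ℂ)) = diagonal (fun i => (e i : ℂ)) * S := by
    have h1 : S * diagonal (fun i => (d i : ℂ)) * star S = diagonal (fun i => (e i : ℂ)) := by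
      calc S * diagonal (fun i => (d i : ℂ)) * star S
          = star V * (U * diagonal (fun i => (d i : ℂ)) * star U) * V := by
            rw [hS, hstarS]; noncomm_ring
        _ = star V * (V * diagonal (fun i => (e i : ℂ)) * star V) * V := by rw [h]
        _ = (star V * V) * diagonal (fun i => (e i : ℂ)) * (star V * V) := by noncomm_ring
        _ = diagonal (fun i => (e i : ℂ)) := by rw [hV2, one_mul, mul_one]
    calc S * diagonal (fun i => (d i : ℂ))
        = (S * diagonal (fun i => (d i : ℂ)) * star S) * S := by
          rw [mul_assoc, mul_assoc, hS'S, mul_one]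
      _ = diagonal (fun i => (e i : ℂ)) * S := by rw [h1]
  have hkey : ∀ i j, S i j ≠ 0 → e i = d j := by
    intro i j hij
    have h2 := congrFun (congrFun hcomm i) j
    rw [Matrix.mul_diagonal, Matrix.diagonal_mul] at h2
    have h3 : S i j * (d j : ℂ) = S i j * (e i : ℂ) := by rw [h2]; ring
    have h4 := mul_left_cancel₀ hij h3
    exact_mod_cast h4.symm
  have hcomm2 : S * diagonal (fun i => (f (d i) : ℂ))
      = diagonal (fun i => (f (e i) : ℂ)) * S := by
    ext i j
    rw [Matrix.mul_diagonal, Matrix.diagonal_mul]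
    by_cases hij : S i j = 0
    · simp [hij]
    · rw [hkey i j hij]; ring
  calc U * diagonal (fun i => (f (d i) : ℂ)) * star U
      = V * (S * diagonal (fun i => (f (d i) : ℂ)) * star S) * star V := by
        rw [← hUS, Matrix.star_mul]; noncomm_ring
    _ = V * (diagonal (fun i => (f (e i) : ℂ)) * (S * star S)) * star V := by
        rw [hcomm2]; noncomm_ring
    _ = V * diagonal (fun i => (f (e i) : ℂ)) * star V := by rw [hSS', mul_one]


lemma matLog_eq {A : Matrix k k ℂ} (hA : A.IsHermitian) {V : Matrix k k ℂ}
    (hV1 : V * star V = 1) (hV2 : star V * V = 1) {e : k → ℝ}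
    (h : A = V * diagonal (fun i => (e i : ℂ)) * star V) :
    matLog hA = V * diagonal (fun i => (Real.log (e i) : ℂ)) * star V :=
  conj_diag_eq_of_eq
    (Matrix.mem_unitaryGroup_iff.mp hA.eigenvectorUnitary.2)
    (Matrix.mem_unitaryGroup_iff'.mp hA.eigenvectorUnitary.2)
    hV1 hV2 Real.log (hA.spectral_theorem.symm.trans h)

lemma entSum_eq_trace {A : Matrix k k ℂ} (hA : A.IsHermitian) :
    entSum hA = (Matrix.trace (A * matLog hA)).re := by
  set U : Matrix k k ℂ := (hA.eigenvectorUnitary : Matrix k k ℂ) with hU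
  have hU2 : star U * U = 1 := Matrix.mem_unitaryGroup_iff'.mp hA.eigenvectorUnitary.2
  have h1 : A * matLog hA
      = (U * diagonal (fun i => (hA.eigenvalues i : ℂ)) * star U) *
        (U * diagonal (fun i => (Real.log (hA.eigenvalues i) : ℂ)) * star U) :=
    congrArg (· * (U * diagonal (fun i => (Real.log (hA.eigenvalues i) : ℂ)) * star U))
      hA.spectral_theorem
  have h2 : A * matLog hA
      = U * (diagonal (fun i => (hA.eigenvalues i : ℂ)) *
          diagonal (fun i => (Real.log (hA.eigenvalues i) : ℂ))) * star U := by
    rw [h1]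
    calc (U * diagonal (fun i => (hA.eigenvalues i : ℂ)) * star U) *
          (U * diagonal (fun i => (Real.log (hA.eigenvalues i) : ℂ)) * star U)
        = U * (diagonal (fun i => (hA.eigenvalues i : ℂ)) * ((star U * U) *
            diagonal (fun i => (Real.log (hA.eigenvalues i) : ℂ)))) * star U := by
          simp only [Matrix.mul_assoc]
      _ = _ := by rw [hU2, one_mul]
  rw [h2, Matrix.trace_mul_cycle, ← Matrix.mul_assoc, hU2, one_mul, diagonal_mul_diagonal,
    Matrix.trace_diagonal, entSum, Complex.re_sum]
  refine Finset.sum_congr rfl fun i _ => ?_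
  rw [← Complex.ofReal_mul, Complex.ofReal_re]


lemma trace_conj_conj {U V : Matrix k k ℂ} (p l : k → ℝ) :
    (Matrix.trace ((U * diagonal (fun i => (p i : ℂ)) * star U) *
        (V * diagonal (fun i => (l i : ℂ)) * star V))).re
      = ∑ i, ∑ j, p i * l j * Complex.normSq ((star U * V) i j) := by
  set S : Matrix k k ℂ := star U * V with hS
  have hstarS : star S = star V * U := by rw [hS, Matrix.star_mul, star_star]
  have h2 : Matrix.trace ((U * diagonal (fun i => (p i : ℂ)) * star U) *
        (V * diagonal (fun i => (l i : ℂ)) * star V))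
      = Matrix.trace (diagonal (fun i => (p i : ℂ)) *
          (S * (diagonal (fun i => (l i : ℂ)) * star S))) := by
    rw [show (U * diagonal (fun i => (p i : ℂ)) * star U) *
          (V * diagonal (fun i => (l i : ℂ)) * star V)
        = U * (diagonal (fun i => (p i : ℂ)) * (S * diagonal (fun i => (l i : ℂ))) * star V)
        from by rw [hS]; simp only [Matrix.mul_assoc]]
    rw [Matrix.trace_mul_comm U, Matrix.mul_assoc, ← hstarS]
    simp only [Matrix.mul_assoc]
  rw [h2, Matrix.trace, Complex.re_sum]
  refine Finset.sum_congr rfl fun i _ => ?_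
  rw [Matrix.diag_apply, Matrix.diagonal_mul]
  have h3 : (S * (diagonal (fun i => (l i : ℂ)) * star S)) i i
      = ∑ j, (l j : ℂ) * (Complex.normSq (S i j) : ℂ) := by
    rw [Matrix.mul_apply]
    refine Finset.sum_congr rfl fun j _ => ?_
    rw [Matrix.diagonal_mul, Matrix.star_apply, Complex.star_def]
    rw [show S i j * ((l j : ℂ) * (starRingEnd ℂ) (S i j))
        = (l j : ℂ) * (S i j * (starRingEnd ℂ) (S i j)) from by ring, Complex.mul_conj]
  rw [h3, Finset.mul_sum, Complex.re_sum]
  refine Finset.sum_congr rfl fun j _ => ?_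
  rw [show (p i : ℂ) * ((l j : ℂ) * (Complex.normSq (S i j) : ℂ))
      = ((p i * l j * Complex.normSq (S i j) : ℝ) : ℂ) from by push_cast; ring,
    Complex.ofReal_re]

lemma normSq_row_sum {S : Matrix k k ℂ} (h : S * star S = 1) (i : k) :
    ∑ j, Complex.normSq (S i j) = 1 := by
  have h1 := congrFun (congrFun h i) i
  rw [Matrix.mul_apply, Matrix.one_apply_eq] at h1
  have h2 : ∑ j, S i j * star S j i = ∑ j, ((Complex.normSq (S i j) : ℝ) : ℂ) :=
    Finset.sum_congr rfl fun j _ => by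
      rw [Matrix.star_apply, Complex.star_def, Complex.mul_conj]
  rw [h2, ← Complex.ofReal_sum] at h1
  exact_mod_cast h1

lemma normSq_col_sum {S : Matrix k k ℂ} (h : star S * S = 1) (j : k) :
    ∑ i, Complex.normSq (S i j) = 1 := by
  have := normSq_row_sum (S := star S) (by rw [star_star]; exact h) j
  simpa [Matrix.star_apply, Complex.normSq_conj] using this

set_option maxHeartbeats 1000000 in
lemma posDef_conj {V : Matrix k k ℂ} (hV1 : V * star V = 1) {q : k → ℝ}
    (hq : ∀ i, 0 < q i) :
    (V * diagonal (fun i => (q i : ℂ)) * star V).PosDef := by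
  have hd : (diagonal (fun i => (q i : ℂ))).PosDef :=
    Matrix.posDef_diagonal_iff.mpr fun i => by exact_mod_cast hq i
  rw [Matrix.star_eq_conjTranspose]
  refine posDef_iff_dotProduct_mulVec.mpr ⟨?_, ?_⟩
  · exact isHermitian_mul_mul_conjTranspose V hd.1
  · intro x hx
    have hx' : Vᴴ *ᵥ x ≠ 0 := by
      intro hc
      apply hx
      have hmm : V *ᵥ (Vᴴ *ᵥ x) = x := by
        rw [Matrix.mulVec_mulVec, ← Matrix.star_eq_conjTranspose, hV1, Matrix.one_mulVec]
      rw [hc, Matrix.mulVec_zero] at hmm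
      exact hmm.symm
    simpa only [conjTranspose_conjTranspose, star_mulVec, dotProduct_mulVec, vecMul_vecMul]
      using hd.dotProduct_mulVec_pos hx'

lemma exp_conj_diag {V : Matrix k k ℂ} (hV1 : V * star V = 1) (hV2 : star V * V = 1)
    (d : k → ℝ) :
    NormedSpace.exp (V * diagonal (fun i => (d i : ℂ)) * star V)
      = V * diagonal (fun i => (Real.exp (d i) : ℂ)) * star V := by
  have hinv : V⁻¹ = star V := Matrix.inv_eq_left_inv hV2
  have hunit : IsUnit V := ⟨⟨V, star V, hV1, hV2⟩, rfl⟩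
  rw [← hinv, Matrix.exp_conj V _ hunit, Matrix.exp_diagonal]
  have hdg : (NormedSpace.exp fun i : k => ((d i : ℝ) : ℂ))
      = fun i : k => ((Real.exp (d i) : ℝ) : ℂ) := by
    rw [Pi.exp_def]
    funext i
    rw [← Complex.exp_eq_exp_ℂ, ← Complex.ofReal_exp]
  rw [hdg]

lemma diag_herm (v : k → ℝ) :
    (diagonal (fun i => (v i : ℂ))).IsHermitian := by
  have hsf : (star fun i : k => ((v i : ℝ) : ℂ)) = fun i => ((v i : ℝ) : ℂ) :=
    funext fun i => by rw [Pi.star_apply, Complex.star_def, Complex.conj_ofReal]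
  rw [Matrix.IsHermitian, Matrix.diagonal_conjTranspose, hsf]

lemma kronecker_isHermitian {n' m' : Type*} [Fintype n'] [Fintype m']
    {A : Matrix n' n' ℂ} {B : Matrix m' m' ℂ}
    (hA : A.IsHermitian) (hB : B.IsHermitian) : (A ⊗ₖ B).IsHermitian := by
  apply Matrix.IsHermitian.ext
  intro i j
  simp only [Matrix.kroneckerMap_apply, star_mul']
  rw [hA.apply, hB.apply]

lemma matLog_isHermitian {A : Matrix k k ℂ} (hA : A.IsHermitian) :
    (matLog hA).IsHermitian := by
  rw [matLog, Matrix.star_eq_conjTranspose]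
  exact isHermitian_mul_mul_conjTranspose _ (diag_herm _)

end Helpers

set_option maxHeartbeats 1000000 in
/-- `ρ_RB = exp(I ⊗ log σ_B − βΔ + Λ_R ⊗ I − I)` is positive definite
and is the unique minimizer of the partial Lagrangian
`ρ ↦ Tr(ρ log ρ) − Tr(ρ (I ⊗ log σ_B − βΔ + Λ_R ⊗ I))` over PSD matrices. -/
theorem stmt17 {n m : Type*} [Fintype n] [Fintype m] [DecidableEq n] [DecidableEq m]
    (σB : Matrix m m ℂ) (hσ : σB.PosDef)
    (Δ : Matrix (n × m) (n × m) ℂ) (hΔ : Δ.PosSemidef)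
    (Λ : Matrix n n ℂ) (hΛ : Λ.IsHermitian) (β : ℝ) :
    (NormedSpace.exp
        ((1 : Matrix n n ℂ) ⊗ₖ matLog hσ.1 - (β : ℂ) • Δ +
          Λ ⊗ₖ (1 : Matrix m m ℂ) - 1)).PosDef ∧
    ∀ (h : (NormedSpace.exp
        ((1 : Matrix n n ℂ) ⊗ₖ matLog hσ.1 - (β : ℂ) • Δ +
          Λ ⊗ₖ (1 : Matrix m m ℂ) - 1)).IsHermitian)
      (ρ : Matrix (n × m) (n × m) ℂ) (hρ : ρ.PosSemidef),
      obj ((1 : Matrix n n ℂ) ⊗ₖ matLog hσ.1 - (β : ℂ) • Δ +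
          Λ ⊗ₖ (1 : Matrix m m ℂ)) h ≤
        obj ((1 : Matrix n n ℂ) ⊗ₖ matLog hσ.1 - (β : ℂ) • Δ +
          Λ ⊗ₖ (1 : Matrix m m ℂ)) hρ.1 ∧
      (obj ((1 : Matrix n n ℂ) ⊗ₖ matLog hσ.1 - (β : ℂ) • Δ +
            Λ ⊗ₖ (1 : Matrix m m ℂ)) hρ.1 =
          obj ((1 : Matrix n n ℂ) ⊗ₖ matLog hσ.1 - (β : ℂ) • Δ +
            Λ ⊗ₖ (1 : Matrix m m ℂ)) h →
        ρ = NormedSpace.exp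
          ((1 : Matrix n n ℂ) ⊗ₖ matLog hσ.1 - (β : ℂ) • Δ +
            Λ ⊗ₖ (1 : Matrix m m ℂ) - 1)) := by
  classical
  set Δt : Matrix (n × m) (n × m) ℂ :=
    (1 : Matrix n n ℂ) ⊗ₖ matLog hσ.1 - (β : ℂ) • Δ + Λ ⊗ₖ (1 : Matrix m m ℂ) with hΔtdef
  have hherm : Δt.IsHermitian := by
    refine Matrix.IsHermitian.add (Matrix.IsHermitian.sub ?_ ?_) ?_
    · exact kronecker_isHermitian Matrix.isHermitian_one (matLog_isHermitian hσ.1)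
    · rw [Matrix.IsHermitian, Matrix.conjTranspose_smul, hΔ.1.eq, Complex.star_def,
        Complex.conj_ofReal]
    · exact kronecker_isHermitian hΛ Matrix.isHermitian_one
  set V : Matrix (n × m) (n × m) ℂ := (hherm.eigenvectorUnitary : Matrix (n × m) (n × m) ℂ)
    with hVdef
  have hV1 : V * star V = 1 := Matrix.mem_unitaryGroup_iff.mp hherm.eigenvectorUnitary.2
  have hV2 : star V * V = 1 := Matrix.mem_unitaryGroup_iff'.mp hherm.eigenvectorUnitary.2
  set lam : (n × m) → ℝ := hherm.eigenvalues with hlamdef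
  have hspec : Δt = V * diagonal (fun j => (lam j : ℂ)) * star V := hherm.spectral_theorem
  have hsub : Δt - 1 = V * diagonal (fun j => ((lam j - 1 : ℝ) : ℂ)) * star V := by
    have hdd : diagonal (fun j : n × m => ((lam j - 1 : ℝ) : ℂ))
        = diagonal (fun j => (lam j : ℂ)) - 1 := by
      rw [← Matrix.diagonal_one, Matrix.diagonal_sub]
      congr 1
      funext j
      push_cast
      ring
    rw [hdd, Matrix.mul_sub, Matrix.mul_one, Matrix.sub_mul, hV1, ← hspec]
  have hexp : NormedSpace.exp (Δt - 1)
      = V * diagonal (fun j => ((Real.exp (lam j - 1) : ℝ) : ℂ)) * star V := by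
    rw [hsub, exp_conj_diag hV1 hV2]
  constructor
  · rw [hexp]
    exact posDef_conj hV1 fun j => Real.exp_pos _
  · intro h ρ hρ
    set U : Matrix (n × m) (n × m) ℂ := (hρ.1.eigenvectorUnitary : Matrix (n × m) (n × m) ℂ)
      with hUdef
    have hU1 : U * star U = 1 := Matrix.mem_unitaryGroup_iff.mp hρ.1.eigenvectorUnitary.2
    have hU2 : star U * U = 1 := Matrix.mem_unitaryGroup_iff'.mp hρ.1.eigenvectorUnitary.2
    set p : (n × m) → ℝ := hρ.1.eigenvalues with hpdef
    have hp : ∀ i, 0 ≤ p i := fun i => hρ.eigenvalues_nonneg i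
    have hρspec : ρ = U * diagonal (fun i => (p i : ℂ)) * star U := hρ.1.spectral_theorem
    have hSS' : (star U * V) * star (star U * V) = 1 := by
      rw [Matrix.star_mul, star_star, Matrix.mul_assoc, ← Matrix.mul_assoc V, hV1, one_mul, hU2]
    have hS'S : star (star U * V) * (star U * V) = 1 := by
      rw [Matrix.star_mul, star_star, Matrix.mul_assoc, ← Matrix.mul_assoc U, hU1, one_mul, hV2]
    have hrow : ∀ i, ∑ j, Complex.normSq ((star U * V) i j) = 1 :=
      fun i => normSq_row_sum hSS' i
    have hcol : ∀ j, ∑ i, Complex.normSq ((star U * V) i j) = 1 :=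
      fun j => normSq_col_sum hS'S j
    have hobjρ : obj Δt hρ.1
        = ∑ i, p i * Real.log (p i)
          - ∑ i, ∑ j, p i * lam j * Complex.normSq ((star U * V) i j) := by
      rw [obj]
      congr 1
      rw [show ρ * Δt = (U * diagonal (fun i => (p i : ℂ)) * star U) *
          (V * diagonal (fun j => (lam j : ℂ)) * star V) from by rw [← hρspec, ← hspec]]
      exact trace_conj_conj p lam
    have hL : matLog h = Δt - 1 := by
      rw [matLog_eq h hV1 hV2 hexp,
        show (fun j : n × m => (Real.log (Real.exp (lam j - 1)) : ℂ))
          = fun j : n × m => ((lam j - 1 : ℝ) : ℂ) from funext fun j => by rw [Real.log_exp],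
        ← hsub]
    have hσtr : (Matrix.trace (NormedSpace.exp (Δt - 1))).re
        = ∑ j, Real.exp (lam j - 1) := by
      rw [hexp, Matrix.trace_mul_cycle, hV2, one_mul,
        Matrix.trace_diagonal, ← Complex.ofReal_sum, Complex.ofReal_re]
    have hobjσ : obj Δt h = -∑ j, Real.exp (lam j - 1) := by
      rw [obj, entSum_eq_trace h, hL, Matrix.mul_sub, Matrix.mul_one, Matrix.trace_sub,
        Complex.sub_re, hσtr]
      ring
    have hmain : obj Δt hρ.1 - obj Δt h
        = ∑ i, ∑ j, Complex.normSq ((star U * V) i j) *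
            (p i * Real.log (p i) - p i * lam j + Real.exp (lam j - 1)) := by
      rw [hobjρ, hobjσ, sub_neg_eq_add]
      have e1 : ∑ i, p i * Real.log (p i)
          = ∑ i, ∑ j, Complex.normSq ((star U * V) i j) * (p i * Real.log (p i)) := by
        refine Finset.sum_congr rfl fun i _ => ?_
        rw [← Finset.sum_mul, hrow i, one_mul]
      have e2 : ∑ j, Real.exp (lam j - 1)
          = ∑ i, ∑ j, Complex.normSq ((star U * V) i j) * Real.exp (lam j - 1) := by
        rw [Finset.sum_comm]
        refine Finset.sum_congr rfl fun j _ => ?_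
        rw [← Finset.sum_mul, hcol j, one_mul]
      rw [e1, e2, ← Finset.sum_sub_distrib, ← Finset.sum_add_distrib]
      refine Finset.sum_congr rfl fun i _ => ?_
      rw [← Finset.sum_sub_distrib, ← Finset.sum_add_distrib]
      refine Finset.sum_congr rfl fun j _ => ?_
      ring
    have hterm : ∀ i j, 0 ≤ Complex.normSq ((star U * V) i j) *
        (p i * Real.log (p i) - p i * lam j + Real.exp (lam j - 1)) :=
      fun i j => mul_nonneg (Complex.normSq_nonneg _) (key_nonneg (hp i))
    have hge : 0 ≤ obj Δt hρ.1 - obj Δt h := by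
      rw [hmain]
      exact Finset.sum_nonneg fun i _ => Finset.sum_nonneg fun j _ => hterm i j
    refine ⟨by linarith, fun heq => ?_⟩
    have hzero : ∑ i, ∑ j, Complex.normSq ((star U * V) i j) *
        (p i * Real.log (p i) - p i * lam j + Real.exp (lam j - 1)) = 0 := by
      rw [← hmain, heq]
      ring
    have hz : ∀ i j, Complex.normSq ((star U * V) i j) *
        (p i * Real.log (p i) - p i * lam j + Real.exp (lam j - 1)) = 0 := by
      intro i j
      have h1 := (Finset.sum_eq_zero_iff_of_nonneg
        (fun i _ => Finset.sum_nonneg fun j _ => hterm i j)).mp hzero i (Finset.mem_univ i)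
      exact (Finset.sum_eq_zero_iff_of_nonneg (fun j _ => hterm i j)).mp h1 j (Finset.mem_univ j)
    have hpq : ∀ i j, (star U * V) i j ≠ 0 → p i = Real.exp (lam j - 1) := by
      intro i j hne
      have hc0 : Complex.normSq ((star U * V) i j) ≠ 0 :=
        fun h0 => hne (Complex.normSq_eq_zero.mp h0)
      exact key_eq (hp i) ((mul_eq_zero.mp (hz i j)).resolve_left hc0)
    have hcomm : diagonal (fun i => (p i : ℂ)) * (star U * V)
        = (star U * V) * diagonal (fun j => ((Real.exp (lam j - 1) : ℝ) : ℂ)) := by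
      ext i j
      rw [Matrix.diagonal_mul, Matrix.mul_diagonal]
      by_cases hij : (star U * V) i j = 0
      · rw [hij]; ring
      · rw [hpq i j hij]; ring
    have hUS : U * (star U * V) = V := by rw [← Matrix.mul_assoc, hU1, one_mul]
    rw [hρspec, hexp]
    calc U * diagonal (fun i => (p i : ℂ)) * star U
        = U * (diagonal (fun i => (p i : ℂ)) * (star U * V) * star (star U * V)) * star U := by
          rw [Matrix.mul_assoc (diagonal fun i => (p i : ℂ)), hSS', mul_one]
      _ = U * ((star U * V) * diagonal (fun j => ((Real.exp (lam j - 1) : ℝ) : ℂ)) *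
            star (star U * V)) * star U := by rw [hcomm]
      _ = (U * (star U * V)) * diagonal (fun j => ((Real.exp (lam j - 1) : ℝ) : ℂ)) *
            (star (star U * V) * star U) := by simp only [Matrix.mul_assoc]
      _ = V * diagonal (fun j => ((Real.exp (lam j - 1) : ℝ) : ℂ)) * star V := by
          rw [hUS, ← Matrix.star_mul, hUS]
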